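/- Let W ∈ ℝ^{4×4} (block scalar) with W_{21} = W_{31} = W_{42} = α and W_{43} = −α for some α ∈ ℝ, diagonal entries W_{11} = W_{44} = w_1, W_{22} = W_{33} = w_2, and all other entries zero. Then (W^k)_{41} = 0 for all k ≥ 1, i.e., player 4 is disturbance decoupled from player 1. -/

import Mathlib

open Matrix

/-- For the 4×4 matrix `W` with `W₂₁ = W₃₁ = W₄₂ = α`, `W₄₃ = −α`,
`W₁₁ = W₄₄ = w₁`, `W₂₂ = W₃₃ = w₂`, and all other entries zero, `(W^k)₄₁ = 0` for
all `k ≥ 1`: player 4 is disturbance decoupled from player 1. -/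
theorem stmt19 (w₁ w₂ α : ℝ)
    (W : Matrix (Fin 4) (Fin 4) ℝ)
    (hW : W = !![w₁, 0, 0, 0; α, w₂, 0, 0; α, 0, w₂, 0; 0, α, -α, w₁]) :
    ∀ k : ℕ, 1 ≤ k → (W ^ k) 3 0 = 0 := by
  have key : ∀ k : ℕ, (W ^ k) 1 0 = (W ^ k) 2 0 ∧ (W ^ k) 3 0 = 0 := by
    intro k
    induction k with
    | zero => simp [Matrix.one_apply]
    | succ n ih =>
      obtain ⟨ih1, ih2⟩ := ih
      rw [pow_succ', Matrix.mul_apply, Matrix.mul_apply, Matrix.mul_apply,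
        Fin.sum_univ_four, Fin.sum_univ_four, Fin.sum_univ_four, hW]
      rw [hW] at ih1 ih2
      norm_num [Matrix.cons_val_zero, Matrix.cons_val_one]; simp only [Matrix.cons_val]; norm_num
      constructor
      · exact Or.inl ih1
      · rw [ih1, ih2]; ring
  intro k _
  exact (key k).2
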